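/- For any integer K ≥ 1, if A, B are real symmetric positive definite d×d matrices satisfying (1 − 1/(2K)) I ⪯ A ⪯ I and (1 − 1/(2K)) I ⪯ B ⪯ I, then the symmetric matrix (AB)^K + (BA)^K is positive semidefinite. -/

import Mathlib

open Matrix Finset

section helpers
variable {d : ℕ}

private lemma dot_self_nonneg' (x : Fin d → ℝ) : 0 ≤ x ⬝ᵥ x :=
  Finset.sum_nonneg fun i _ => mul_self_nonneg _

private lemma cs' (x y : Fin d → ℝ) : x ⬝ᵥ y ≤ Real.sqrt ((x ⬝ᵥ x) * (y ⬝ᵥ y)) := by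
  have h := Finset.sum_mul_sq_le_sq_mul_sq Finset.univ x y
  have h2 : (x ⬝ᵥ y) ^ 2 ≤ (x ⬝ᵥ x) * (y ⬝ᵥ y) := by
    simpa [dotProduct, sq] using h
  calc x ⬝ᵥ y ≤ |x ⬝ᵥ y| := le_abs_self _
    _ = Real.sqrt ((x ⬝ᵥ y) ^ 2) := (Real.sqrt_sq_eq_abs _).symm
    _ ≤ _ := Real.sqrt_le_sqrt h2

private lemma quad_le' {S : Matrix (Fin d) (Fin d) ℝ} {c : ℝ}
    (h : ((c • 1 : Matrix (Fin d) (Fin d) ℝ) - S).PosSemidef) (x : Fin d → ℝ) :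
    x ⬝ᵥ (S *ᵥ x) ≤ c * (x ⬝ᵥ x) := by
  have h0 := h.dotProduct_mulVec_nonneg x
  simp only [star_trivial, sub_mulVec, smul_mulVec, one_mulVec, dotProduct_sub,
    dotProduct_smul, smul_eq_mul] at h0
  linarith

private lemma smul_psd {S : Matrix (Fin d) (Fin d) ℝ} {c : ℝ} (hc : 0 ≤ c)
    (hS : S.PosSemidef) : (c • S).PosSemidef := by
  refine PosSemidef.of_dotProduct_mulVec_nonneg ?_ fun x => ?_
  · unfold Matrix.IsHermitian
    rw [conjTranspose_smul, hS.1]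
    simp
  · have := hS.dotProduct_mulVec_nonneg x
    simp only [smul_mulVec, dotProduct_smul, smul_eq_mul]
    exact mul_nonneg hc this

open scoped MatrixOrder in
private lemma sqnorm_le' {S : Matrix (Fin d) (Fin d) ℝ} {c : ℝ} (hS : S.PosSemidef)
    (h : ((c • 1 : Matrix (Fin d) (Fin d) ℝ) - S).PosSemidef) (hc : 0 ≤ c) (x : Fin d → ℝ) :
    (S *ᵥ x) ⬝ᵥ (S *ᵥ x) ≤ c ^ 2 * (x ⬝ᵥ x) := by
  have hsym : Sᵀ = S := hS.1
  have e0 : (S *ᵥ x) ⬝ᵥ (S *ᵥ x) = x ⬝ᵥ ((S * S) *ᵥ x) := by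
    rw [dotProduct_mulVec (S *ᵥ x) S x, ← hsym, vecMul_transpose, hsym, dotProduct_comm,
      ← mulVec_mulVec]
  rw [e0]
  set s := CFC.sqrt S with hs_def
  have hs : s.PosSemidef := (CFC.sqrt_nonneg S).posSemidef
  have hss : s * s = S := CFC.sqrt_mul_sqrt_self S hS.nonneg
  have h1 : (s * ((c • 1 : Matrix (Fin d) (Fin d) ℝ) - S) * sᴴ).PosSemidef :=
    h.mul_mul_conjTranspose_same s
  have hsH : sᴴ = s := hs.1
  have e1 : s * ((c • 1 : Matrix (Fin d) (Fin d) ℝ) - S) * sᴴ = c • S - S * S := by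
    rw [hsH, ← hss]
    simp only [Matrix.mul_sub, Matrix.sub_mul, Matrix.mul_smul, Matrix.smul_mul, mul_one]
    noncomm_ring
  rw [e1] at h1
  have e2 : ((c ^ 2 • 1 : Matrix (Fin d) (Fin d) ℝ)) - S * S
      = c • ((c • 1 : Matrix (Fin d) (Fin d) ℝ) - S) + (c • S - S * S) := by
    module
  have hfinal : (((c ^ 2 • 1 : Matrix (Fin d) (Fin d) ℝ)) - S * S).PosSemidef := by
    rw [e2]; exact (smul_psd hc h).add h1
  exact quad_le' hfinal x

private lemma dot_le_of_sqnorm' {x v : Fin d → ℝ} {r : ℝ} (hr : 0 ≤ r)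
    (h : v ⬝ᵥ v ≤ r ^ 2 * (x ⬝ᵥ x)) : x ⬝ᵥ v ≤ r * (x ⬝ᵥ x) := by
  have hx := dot_self_nonneg' x
  have hv := dot_self_nonneg' v
  calc x ⬝ᵥ v ≤ Real.sqrt ((x ⬝ᵥ x) * (v ⬝ᵥ v)) := cs' x v
    _ ≤ Real.sqrt ((r * (x ⬝ᵥ x)) ^ 2) := Real.sqrt_le_sqrt (by nlinarith)
    _ = r * (x ⬝ᵥ x) := Real.sqrt_sq (by positivity)

private lemma sqnorm_add' {u v : Fin d → ℝ} {a b t : ℝ} (ha : 0 ≤ a) (hb : 0 ≤ b) (ht : 0 ≤ t)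
    (hu : u ⬝ᵥ u ≤ a ^ 2 * t) (hv : v ⬝ᵥ v ≤ b ^ 2 * t) :
    (u + v) ⬝ᵥ (u + v) ≤ (a + b) ^ 2 * t := by
  have hu0 := dot_self_nonneg' u
  have hv0 := dot_self_nonneg' v
  have huv : u ⬝ᵥ v ≤ a * b * t := by
    calc u ⬝ᵥ v ≤ Real.sqrt ((u ⬝ᵥ u) * (v ⬝ᵥ v)) := cs' u v
      _ ≤ Real.sqrt ((a * b * t) ^ 2) := Real.sqrt_le_sqrt (by nlinarith)
      _ = a * b * t := Real.sqrt_sq (by positivity)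
  have e : (u + v) ⬝ᵥ (u + v) = u ⬝ᵥ u + 2 * (u ⬝ᵥ v) + v ⬝ᵥ v := by
    rw [dotProduct_add, add_dotProduct, add_dotProduct, dotProduct_comm v u]
    ring
  rw [e]; nlinarith

private lemma sum_mulVec' {ι : Type*} (s : Finset ι) (M : ι → Matrix (Fin d) (Fin d) ℝ)
    (x : Fin d → ℝ) : (∑ j ∈ s, M j) *ᵥ x = ∑ j ∈ s, M j *ᵥ x := by
  classical
  induction s using Finset.induction with
  | empty => simp
  | insert _ _ hnot ih => simp [Finset.sum_insert hnot, add_mulVec, ih]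

private lemma dot_sum' {ι : Type*} (s : Finset ι) (v : ι → Fin d → ℝ) (x : Fin d → ℝ) :
    x ⬝ᵥ (∑ j ∈ s, v j) = ∑ j ∈ s, x ⬝ᵥ v j := by
  classical
  induction s using Finset.induction with
  | empty => simp
  | insert _ _ hnot ih => simp [Finset.sum_insert hnot, dotProduct_add, ih]

/-- Core estimate: x ⬝ (1 - (AB)^K) x ≤ x ⬝ x. -/
private lemma main_aux (K d : ℕ) (hK : 1 ≤ K)
    (A B : Matrix (Fin d) (Fin d) ℝ) (hA : A.PosDef) (hB : B.PosDef)
    (hA1 : (A - (1 - 1 / (2 * (K : ℝ))) • 1).PosSemidef)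
    (hA2 : ((1 : Matrix (Fin d) (Fin d) ℝ) - A).PosSemidef)
    (hB1 : (B - (1 - 1 / (2 * (K : ℝ))) • 1).PosSemidef)
    (hB2 : ((1 : Matrix (Fin d) (Fin d) ℝ) - B).PosSemidef)
    (x : Fin d → ℝ) :
    x ⬝ᵥ (((1 : Matrix (Fin d) (Fin d) ℝ) - (A * B) ^ K) *ᵥ x) ≤ x ⬝ᵥ x := by
  have hKR : (1 : ℝ) ≤ (K : ℝ) := by exact_mod_cast hK
  set ε : ℝ := 1 / (2 * (K : ℝ)) with hε_def
  have hε : 0 ≤ ε := by positivity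
  -- contraction of A and B
  have h1A : ((1 : ℝ) • 1 - A : Matrix (Fin d) (Fin d) ℝ).PosSemidef := by
    rw [one_smul]; exact hA2
  have h1B : ((1 : ℝ) • 1 - B : Matrix (Fin d) (Fin d) ℝ).PosSemidef := by
    rw [one_smul]; exact hB2
  have hAc : ∀ y : Fin d → ℝ, (A *ᵥ y) ⬝ᵥ (A *ᵥ y) ≤ (1 : ℝ) ^ 2 * (y ⬝ᵥ y) :=
    sqnorm_le' hA.posSemidef h1A zero_le_one
  have hBc : ∀ y : Fin d → ℝ, (B *ᵥ y) ⬝ᵥ (B *ᵥ y) ≤ (1 : ℝ) ^ 2 * (y ⬝ᵥ y) :=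
    sqnorm_le' hB.posSemidef h1B zero_le_one
  -- (1-A), (1-B) small
  have hA1' : ((ε • 1 : Matrix (Fin d) (Fin d) ℝ) - (1 - A)).PosSemidef := by
    have e : (ε • 1 : Matrix (Fin d) (Fin d) ℝ) - (1 - A) = A - (1 - ε) • 1 := by
      rw [sub_smul, one_smul]; abel
    rw [e]; exact hA1
  have hB1' : ((ε • 1 : Matrix (Fin d) (Fin d) ℝ) - (1 - B)).PosSemidef := by
    have e : (ε • 1 : Matrix (Fin d) (Fin d) ℝ) - (1 - B) = B - (1 - ε) • 1 := by
      rw [sub_smul, one_smul]; abel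
    rw [e]; exact hB1
  have h1Ac : ∀ y : Fin d → ℝ, ((1 - A) *ᵥ y) ⬝ᵥ ((1 - A) *ᵥ y) ≤ ε ^ 2 * (y ⬝ᵥ y) :=
    sqnorm_le' hA2 hA1' hε
  have h1Bc : ∀ y : Fin d → ℝ, ((1 - B) *ᵥ y) ⬝ᵥ ((1 - B) *ᵥ y) ≤ ε ^ 2 * (y ⬝ᵥ y) :=
    sqnorm_le' hB2 hB1' hε
  -- powers of AB are contractions
  have hpow : ∀ (j : ℕ) (y : Fin d → ℝ),
      ((A * B) ^ j *ᵥ y) ⬝ᵥ ((A * B) ^ j *ᵥ y) ≤ y ⬝ᵥ y := by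
    intro j
    induction j with
    | zero => intro y; simp [pow_zero, one_mulVec]
    | succ n ih =>
      intro y
      rw [pow_succ, ← mulVec_mulVec]
      calc ((A * B) ^ n *ᵥ ((A * B) *ᵥ y)) ⬝ᵥ ((A * B) ^ n *ᵥ ((A * B) *ᵥ y))
          ≤ ((A * B) *ᵥ y) ⬝ᵥ ((A * B) *ᵥ y) := ih _
        _ ≤ y ⬝ᵥ y := by
            rw [← mulVec_mulVec]
            calc (A *ᵥ (B *ᵥ y)) ⬝ᵥ (A *ᵥ (B *ᵥ y)) ≤ (1:ℝ)^2 * ((B *ᵥ y) ⬝ᵥ (B *ᵥ y)) :=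
                  hAc _
              _ ≤ (1:ℝ)^2 * ((1:ℝ)^2 * (y ⬝ᵥ y)) := by
                  have := hBc y; nlinarith [dot_self_nonneg' (B *ᵥ y)]
              _ = y ⬝ᵥ y := by ring
  -- 1 - AB is small
  have hE : ∀ y : Fin d → ℝ,
      (((1 : Matrix (Fin d) (Fin d) ℝ) - A * B) *ᵥ y) ⬝ᵥ (((1 : Matrix (Fin d) (Fin d) ℝ) - A * B) *ᵥ y)
        ≤ (2 * ε) ^ 2 * (y ⬝ᵥ y) := by
    intro y
    have edec : (1 : Matrix (Fin d) (Fin d) ℝ) - A * B = (1 - A) + A * (1 - B) := by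
      noncomm_ring
    rw [edec, add_mulVec, ← mulVec_mulVec]
    have hbound2 : (A *ᵥ ((1 - B) *ᵥ y)) ⬝ᵥ (A *ᵥ ((1 - B) *ᵥ y)) ≤ ε ^ 2 * (y ⬝ᵥ y) := by
      calc (A *ᵥ ((1 - B) *ᵥ y)) ⬝ᵥ (A *ᵥ ((1 - B) *ᵥ y))
          ≤ (1:ℝ)^2 * (((1 - B) *ᵥ y) ⬝ᵥ ((1 - B) *ᵥ y)) := hAc _
        _ ≤ ε ^ 2 * (y ⬝ᵥ y) := by have := h1Bc y; nlinarith
    have := sqnorm_add' hε hε (dot_self_nonneg' y) (h1Ac y) hbound2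
    calc ((1 - A) *ᵥ y + A *ᵥ ((1 - B) *ᵥ y)) ⬝ᵥ ((1 - A) *ᵥ y + A *ᵥ ((1 - B) *ᵥ y))
        ≤ (ε + ε) ^ 2 * (y ⬝ᵥ y) := this
      _ = (2 * ε) ^ 2 * (y ⬝ᵥ y) := by ring
  -- geometric sum
  have hgeom : (1 : Matrix (Fin d) (Fin d) ℝ) - (A * B) ^ K
      = (∑ j ∈ Finset.range K, (A * B) ^ j) * ((1 : Matrix (Fin d) (Fin d) ℝ) - A * B) := by
    have h := geom_sum_mul (A * B) K
    have : (∑ j ∈ Finset.range K, (A * B) ^ j) * ((1 : Matrix (Fin d) (Fin d) ℝ) - A * B)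
        = -((∑ j ∈ Finset.range K, (A * B) ^ j) * (A * B - 1)) := by noncomm_ring
    rw [this, h]
    abel
  rw [hgeom, ← mulVec_mulVec, sum_mulVec', dot_sum']
  set v := ((1 : Matrix (Fin d) (Fin d) ℝ) - A * B) *ᵥ x with hv_def
  have hterm : ∀ j ∈ Finset.range K, x ⬝ᵥ ((A * B) ^ j *ᵥ v) ≤ (1 / (K : ℝ)) * (x ⬝ᵥ x) := by
    intro j _
    apply dot_le_of_sqnorm' (by positivity)
    calc ((A * B) ^ j *ᵥ v) ⬝ᵥ ((A * B) ^ j *ᵥ v) ≤ v ⬝ᵥ v := hpow j v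
      _ ≤ (2 * ε) ^ 2 * (x ⬝ᵥ x) := hE x
      _ = (1 / (K : ℝ)) ^ 2 * (x ⬝ᵥ x) := by
          rw [hε_def]
          have : (K : ℝ) ≠ 0 := by linarith
          field_simp
  calc ∑ j ∈ Finset.range K, x ⬝ᵥ ((A * B) ^ j *ᵥ v)
      ≤ ∑ j ∈ Finset.range K, (1 / (K : ℝ)) * (x ⬝ᵥ x) := Finset.sum_le_sum hterm
    _ = (K : ℝ) * ((1 / (K : ℝ)) * (x ⬝ᵥ x)) := by
        rw [Finset.sum_const, Finset.card_range, nsmul_eq_mul]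
    _ = x ⬝ᵥ x := by
        have : (K : ℝ) ≠ 0 := by linarith
        field_simp

end helpers

/-- For K ≥ 1 and symmetric positive definite A, B with
(1 - 1/(2K)) I ⪯ A ⪯ I and (1 - 1/(2K)) I ⪯ B ⪯ I, the matrix (AB)^K + (BA)^K is
positive semidefinite. -/
theorem statement5 (K d : ℕ) (hK : 1 ≤ K)
    (A B : Matrix (Fin d) (Fin d) ℝ) (hA : A.PosDef) (hB : B.PosDef)
    (hA1 : (A - (1 - 1 / (2 * (K : ℝ))) • 1).PosSemidef)
    (hA2 : ((1 : Matrix (Fin d) (Fin d) ℝ) - A).PosSemidef)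
    (hB1 : (B - (1 - 1 / (2 * (K : ℝ))) • 1).PosSemidef)
    (hB2 : ((1 : Matrix (Fin d) (Fin d) ℝ) - B).PosSemidef) :
    ((A * B) ^ K + (B * A) ^ K).PosSemidef := by
  refine PosSemidef.of_dotProduct_mulVec_nonneg ?_ ?_
  · -- Hermitian
    have hAh : Aᴴ = A := hA.1
    have hBh : Bᴴ = B := hB.1
    show ((A * B) ^ K + (B * A) ^ K)ᴴ = _
    rw [conjTranspose_add, conjTranspose_pow, conjTranspose_pow, conjTranspose_mul,
      conjTranspose_mul, hAh, hBh, add_comm]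
  · intro x
    have h1 := main_aux K d hK A B hA hB hA1 hA2 hB1 hB2 x
    have h2 := main_aux K d hK B A hB hA hB1 hB2 hA1 hA2 x
    have e1 : x ⬝ᵥ ((A * B) ^ K *ᵥ x)
        = x ⬝ᵥ x - x ⬝ᵥ (((1 : Matrix (Fin d) (Fin d) ℝ) - (A * B) ^ K) *ᵥ x) := by
      rw [sub_mulVec, dotProduct_sub, one_mulVec]; ring
    have e2 : x ⬝ᵥ ((B * A) ^ K *ᵥ x)
        = x ⬝ᵥ x - x ⬝ᵥ (((1 : Matrix (Fin d) (Fin d) ℝ) - (B * A) ^ K) *ᵥ x) := by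
      rw [sub_mulVec, dotProduct_sub, one_mulVec]; ring
    simp only [star_trivial, add_mulVec, dotProduct_add]
    rw [e1, e2]
    linarith
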